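/- Let ε ≥ 0, z = ⌊1+ε⌋, and γ = ((z+1)² − (1+ε)(z+1)) / ((1+ε)z − z²). Then γ ≥ 0, (z+1)² + γz² = (1+ε)((z+1) + γz), and ((z+1)² + γz²)/(1+γ) = (1+ε)·z(z+1)/(2z−ε). -/

import Mathlib

theorem stmt_11 (ε : ℝ) (hε : 0 ≤ ε) (z : ℕ) (hz : z = ⌊1 + ε⌋₊)
    (hden : 0 < (1 + ε) * z - (z : ℝ) ^ 2) :
    0 ≤ (((z : ℝ) + 1) ^ 2 - (1 + ε) * (z + 1)) / ((1 + ε) * z - z ^ 2) ∧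
    ((z : ℝ) + 1) ^ 2 +
        ((((z : ℝ) + 1) ^ 2 - (1 + ε) * (z + 1)) / ((1 + ε) * z - z ^ 2)) * z ^ 2 =
      (1 + ε) * (((z : ℝ) + 1) +
        ((((z : ℝ) + 1) ^ 2 - (1 + ε) * (z + 1)) / ((1 + ε) * z - z ^ 2)) * z) ∧
    (((z : ℝ) + 1) ^ 2 +
        ((((z : ℝ) + 1) ^ 2 - (1 + ε) * (z + 1)) / ((1 + ε) * z - z ^ 2)) * z ^ 2) /
      (1 + (((z : ℝ) + 1) ^ 2 - (1 + ε) * (z + 1)) / ((1 + ε) * z - z ^ 2)) =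
      (1 + ε) * ((z : ℝ) * (z + 1)) / (2 * z - ε) := by
  have hD : ((1 + ε) * z - (z : ℝ) ^ 2) ≠ 0 := ne_of_gt hden
  have hlt : (1 : ℝ) + ε < z + 1 := by
    rw [hz]; exact Nat.lt_floor_add_one (1 + ε)
  have hεz : ε < (z : ℝ) := by linarith
  have hnum : 0 ≤ (((z : ℝ) + 1) ^ 2 - (1 + ε) * (z + 1)) := by nlinarith
  have h2 : (0 : ℝ) < 2 * z - ε := by nlinarith
  have h2' : (2 : ℝ) * z - ε ≠ 0 := ne_of_gt h2
  have hγ : (0 : ℝ) ≤ (((z : ℝ) + 1) ^ 2 - (1 + ε) * (z + 1)) / ((1 + ε) * z - z ^ 2) :=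
    div_nonneg hnum (le_of_lt hden)
  have h1γ : (1 : ℝ) + (((z : ℝ) + 1) ^ 2 - (1 + ε) * (z + 1)) / ((1 + ε) * z - z ^ 2) ≠ 0 := by
    positivity
  have hg := div_mul_cancel₀ (((z : ℝ) + 1) ^ 2 - (1 + ε) * (z + 1)) hD
  refine ⟨hγ, by linear_combination (-1 : ℝ) * hg, ?_⟩
  rw [div_eq_div_iff h1γ h2']
  linear_combination (-(1 + 2 * (z : ℝ)) : ℝ) * hg
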